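/- Let k be a positive integer, θ > 0, and let J be a random variable distributed as Gamma with shape k and scale θ, independent of a nonnegative real random variable I. Let L(s) = E[exp(−sI)] denote the Laplace transform of I and set ϖ = 1/θ. Then P(J > I) = Σ_{j=0}^{k−1} ((−ϖ)^j / j!) · L^{(j)}(ϖ), where L^{(j)} is the j-th derivative of L. -/

import Mathlib

open MeasureTheory ProbabilityTheory Finset

section CoverageAux
open Real Set Filter

lemma my_pow_mul_exp_neg_le (n : ℕ) {c x : ℝ} (hc : 0 < c) (hx : 0 ≤ x) :
    x ^ n * Real.exp (-(c * x)) ≤ n.factorial / c ^ n := by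
  have h1 : (c * x) ^ n / n.factorial ≤ Real.exp (c * x) := by
    calc (c * x) ^ n / n.factorial
        ≤ ∑ i ∈ Finset.range (n + 1), (c * x) ^ i / i.factorial :=
          Finset.single_le_sum (f := fun i => (c * x) ^ i / i.factorial)
            (fun i _ => by positivity) (Finset.self_mem_range_succ n)
      _ ≤ Real.exp (c * x) := Real.sum_le_exp_of_nonneg (by positivity) _
  have h1' : c ^ n * x ^ n ≤ (n.factorial : ℝ) * Real.exp (c * x) := by
    rw [← mul_pow]
    rw [div_le_iff₀ (by positivity : (0:ℝ) < n.factorial)] at h1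
    linarith [h1]
  have hE : Real.exp (-(c * x)) * Real.exp (c * x) = 1 := by
    rw [← Real.exp_add]; simp
  rw [le_div_iff₀ (by positivity : (0:ℝ) < c ^ n)]
  have := mul_le_mul_of_nonneg_right h1' (Real.exp_pos (-(c * x))).le
  calc x ^ n * Real.exp (-(c * x)) * c ^ n
      = c ^ n * x ^ n * Real.exp (-(c * x)) := by ring
    _ ≤ (n.factorial : ℝ) * Real.exp (c * x) * Real.exp (-(c * x)) := this
    _ = n.factorial := by rw [mul_assoc, mul_comm (Real.exp (c*x)), hE, mul_one]

lemma my_G_hasDerivAt (m : ℕ) (r y : ℝ) :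
    HasDerivAt (fun t => ∑ j ∈ Finset.range (m + 1),
        Real.exp (-(r * t)) * (r * t) ^ j / j.factorial)
      (-(r ^ (m + 1) * y ^ m * Real.exp (-(r * y)) / m.factorial)) y := by
  induction m with
  | zero =>
      simp only [Finset.sum_range_one, pow_zero, mul_one, Nat.factorial_zero, Nat.cast_one,
        div_one, pow_one]
      have h : HasDerivAt (fun t : ℝ => -(r * t)) (-r) y := by
        simpa [Pi.neg_def] using ((hasDerivAt_id y).const_mul r).neg
      simpa [mul_comm] using h.exp
  | succ n ih =>
      simp only [Finset.sum_range_succ (n := n + 1)]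
      have h1 : HasDerivAt (fun t : ℝ => Real.exp (-(r * t)))
          (Real.exp (-(r * y)) * (-r)) y := by
        have h : HasDerivAt (fun t : ℝ => -(r * t)) (-r) y := by
          simpa [Pi.neg_def] using ((hasDerivAt_id y).const_mul r).neg
        exact h.exp
      have h2 : HasDerivAt (fun t : ℝ => (r * t) ^ (n + 1))
          ((n + 1 : ℕ) * (r * y) ^ n * r) y := by
        have h : HasDerivAt (fun t : ℝ => r * t) r y := by
          simpa using (hasDerivAt_id y).const_mul r
        exact h.pow (n + 1)
      have h3 := (h1.mul h2).div_const ((n + 1).factorial : ℝ)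
      have h4 := ih.add h3
      refine h4.congr_deriv (Eq.symm ?_)
      have hfac : ((n + 1).factorial : ℝ) = (n + 1) * n.factorial := by
        rw [Nat.factorial_succ]; push_cast; ring
      have hfn : (n.factorial : ℝ) ≠ 0 := Nat.cast_ne_zero.mpr n.factorial_ne_zero
      have hfn1 : ((n + 1).factorial : ℝ) ≠ 0 := Nat.cast_ne_zero.mpr (n+1).factorial_ne_zero
      field_simp
      rw [hfac]
      push_cast
      ring

lemma my_gamma_tail (m : ℕ) {r : ℝ} (hr : 0 < r) {y : ℝ} (hy : 0 ≤ y) :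
    gammaMeasure (m + 1) r (Set.Ioi y)
      = ENNReal.ofReal (∑ j ∈ Finset.range (m + 1),
          Real.exp (-(r * y)) * (r * y) ^ j / j.factorial) := by
  set G : ℝ → ℝ := fun t => ∑ j ∈ Finset.range (m + 1),
      Real.exp (-(r * t)) * (r * t) ^ j / j.factorial with hG
  set g : ℝ → ℝ := fun x => r ^ (m + 1) * x ^ m * Real.exp (-(r * x)) / m.factorial with hg
  have hG' : ∀ t, HasDerivAt G (-(g t)) t := fun t => my_G_hasDerivAt m r t
  have htend : Tendsto G atTop (nhds 0) := by
    have : Tendsto (fun t : ℝ => ∑ j ∈ Finset.range (m + 1),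
        Real.exp (-(r * t)) * (r * t) ^ j / j.factorial) atTop
        (nhds (∑ j ∈ Finset.range (m + 1), (0:ℝ))) := by
      refine tendsto_finset_sum _ fun j _ => ?_
      have h := (Real.tendsto_pow_mul_exp_neg_atTop_nhds_zero j).comp
        (tendsto_id.const_mul_atTop hr)
      have h2 := h.div_const (j.factorial : ℝ)
      simp only [Function.comp_def, zero_div] at h2
      refine h2.congr fun t => ?_
      simp [mul_comm]
    simpa using this
  have hgnn : ∀ x ∈ Set.Ici y, 0 ≤ g x := by
    intro x hx
    have hx0 : 0 ≤ x := le_trans hy hx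
    simp only [hg]
    positivity
  have hderivNeg : ∀ x ∈ Set.Ici y, HasDerivAt (fun t => -G t) (g x) x := by
    intro x _
    simpa [Pi.neg_def] using (hG' x).neg
  have hint : IntegrableOn g (Set.Ioi y) := by
    have := integrableOn_Ioi_deriv_of_nonneg' hderivNeg
      (fun x hx => hgnn x (Set.mem_Ici.mpr (le_of_lt hx))) (htend.neg)
    simpa using this
  have key : ∫ x in Set.Ioi y, g x = G y := by
    have h := integral_Ioi_of_hasDerivAt_of_tendsto' hderivNeg hint (htend.neg)
    simp only [neg_zero] at h
    linarith [h]
  have hGy_nn : 0 ≤ G y := by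
    apply Finset.sum_nonneg
    intro j _
    have : (0:ℝ) ≤ (r * y) ^ j := by positivity
    positivity
  rw [gammaMeasure, withDensity_apply _ measurableSet_Ioi]
  have hpdf : ∀ x ∈ Set.Ioi y, gammaPDF (m + 1) r x = ENNReal.ofReal (g x) := by
    intro x hx
    have hx0 : 0 ≤ x := le_of_lt (lt_of_le_of_lt hy hx)
    rw [gammaPDF_of_nonneg hx0]
    congr 1
    have h1 : r ^ ((m + 1 : ℕ) : ℝ) = r ^ (m + 1) := by
      rw [Real.rpow_natCast]
    have h2 : x ^ (((m + 1 : ℕ) : ℝ) - 1) = x ^ m := by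
      have : ((m + 1 : ℕ) : ℝ) - 1 = (m : ℝ) := by push_cast; ring
      rw [this, Real.rpow_natCast]
    have h3 : Real.Gamma ((m + 1 : ℕ) : ℝ) = m.factorial := by
      have := Real.Gamma_nat_eq_factorial m
      rw [← this]
      norm_num
    push_cast at h1 h2 h3
    rw [h1, h2, h3, hg]
    ring
  rw [setLIntegral_congr_fun measurableSet_Ioi hpdf]
  rw [← ofReal_integral_eq_lintegral_ofReal hint]
  · rw [key]
  · rw [Filter.EventuallyLE, ae_restrict_iff' measurableSet_Ioi]
    exact ae_of_all _ fun x hx => hgnn x (Set.mem_Ici.mpr (le_of_lt hx))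

end CoverageAux

/-- Coverage probability via the Laplace transform of the interference: if `J ~ Gamma(k, θ)`
with integer shape `k` is independent of the nonnegative random variable `I`, and
`L(s) = E[exp(−sI)]` with `ϖ = 1/θ`, then
`P(J > I) = ∑_{j=0}^{k−1} ((−ϖ)^j / j!) L^(j)(ϖ)`. -/

theorem gamma_exceeds_interference_prob
    {Ω : Type*} [MeasureSpace Ω] [IsProbabilityMeasure (ℙ : Measure Ω)]
    (k : ℕ) (hk : 0 < k) (θ : ℝ) (hθ : 0 < θ)
    (J I : Ω → ℝ) (hJ : Measurable J) (hI : Measurable I) (hI0 : ∀ a, 0 ≤ I a)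
    (hindep : IndepFun J I ℙ)
    (hlaw : Measure.map J ℙ = gammaMeasure k (1 / θ))
    (L : ℝ → ℝ) (hL : L = fun s => ∫ a, Real.exp (-s * I a) ∂ℙ)
    (ϖ : ℝ) (hϖ : ϖ = 1 / θ) :
    (ℙ {a : Ω | J a > I a}).toReal =
      ∑ j ∈ Finset.range k, ((-ϖ) ^ j / j.factorial) * iteratedDeriv j L ϖ := by
  obtain ⟨m, rfl⟩ : ∃ m, k = m + 1 := ⟨k - 1, (Nat.succ_pred_eq_of_pos hk).symm⟩
  have hϖ0 : 0 < ϖ := by rw [hϖ]; positivity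
  set M : ℕ → ℝ → ℝ := fun j s => ∫ a, (-(I a)) ^ j * Real.exp (-(s * I a)) ∂ℙ with hM
  -- measurability of integrands
  have hmeas : ∀ (j : ℕ) (s : ℝ),
      Measurable (fun a => (-(I a)) ^ j * Real.exp (-(s * I a))) := by
    intro j s
    exact ((hI.neg.pow measurable_const)).mul (((hI.const_mul s).neg).exp)
  -- integrability
  have hMint : ∀ (j : ℕ) (s : ℝ), 0 < s →
      Integrable (fun a => (-(I a)) ^ j * Real.exp (-(s * I a))) ℙ := by
    intro j s hs
    refine (integrable_const ((j.factorial : ℝ) / s ^ j)).mono'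
      (hmeas j s).aestronglyMeasurable (ae_of_all _ fun a => ?_)
    have h0 := hI0 a
    have : ‖(-(I a)) ^ j * Real.exp (-(s * I a))‖
        = (I a) ^ j * Real.exp (-(s * I a)) := by
      rw [Real.norm_eq_abs, abs_mul, abs_pow, abs_neg, abs_of_nonneg h0,
        abs_of_pos (Real.exp_pos _)]
    rw [this]
    exact my_pow_mul_exp_neg_le j hs h0
  -- derivative of M j is M (j+1)
  have hMderiv : ∀ (j : ℕ) (s : ℝ), 0 < s → HasDerivAt (M j) (M (j + 1) s) s := by
    intro j s hs
    have hs2 : 0 < s / 2 := by linarith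
    have := hasDerivAt_integral_of_dominated_loc_of_deriv_le (μ := (ℙ : Measure Ω))
      (F := fun x a => (-(I a)) ^ j * Real.exp (-(x * I a)))
      (F' := fun x a => (-(I a)) ^ (j + 1) * Real.exp (-(x * I a)))
      (x₀ := s) (s := Metric.ball s (s / 2)) (Metric.ball_mem_nhds s hs2)
      (Filter.Eventually.of_forall fun x => (hmeas j x).aestronglyMeasurable)
      (hMint j s hs)
      ((hmeas (j + 1) s).aestronglyMeasurable)
      (bound := fun a => ((j + 1).factorial : ℝ) / (s / 2) ^ (j + 1))
      ?_ (integrable_const _) ?_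
    · exact this.2
    · refine ae_of_all _ fun a x hx => ?_
      have h0 := hI0 a
      have hxball : s / 2 < x := by
        rw [Metric.mem_ball, Real.dist_eq, abs_lt] at hx
        linarith [hx.1]
      have hnorm : ‖(-(I a)) ^ (j + 1) * Real.exp (-(x * I a))‖
          = (I a) ^ (j + 1) * Real.exp (-(x * I a)) := by
        rw [Real.norm_eq_abs, abs_mul, abs_pow, abs_neg, abs_of_nonneg h0,
          abs_of_pos (Real.exp_pos _)]
      rw [hnorm]
      calc (I a) ^ (j + 1) * Real.exp (-(x * I a))
          ≤ (I a) ^ (j + 1) * Real.exp (-(s / 2 * I a)) := by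
            apply mul_le_mul_of_nonneg_left _ (by positivity)
            apply Real.exp_le_exp.mpr
            apply neg_le_neg
            exact mul_le_mul_of_nonneg_right hxball.le h0
        _ ≤ ((j + 1).factorial : ℝ) / (s / 2) ^ (j + 1) :=
            my_pow_mul_exp_neg_le (j + 1) hs2 h0
    · refine ae_of_all _ fun a x _ => ?_
      have hinner : HasDerivAt (fun x : ℝ => -(x * I a)) (-(I a)) x := by
        simpa [Pi.neg_def] using ((hasDerivAt_id x).mul_const (I a)).neg
      have hexp := hinner.exp
      have := hexp.const_mul ((-(I a)) ^ j)
      refine this.congr_deriv (Eq.symm ?_)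
      show (-I a) ^ (j+1) * Real.exp (-(x * I a)) = _
      rw [pow_succ]
      ring
  -- iterated derivatives of L
  have hL0 : ∀ s : ℝ, L s = M 0 s := by
    intro s
    rw [hL, hM]
    simp [neg_mul]
  have hIter : ∀ (j : ℕ), ∀ s : ℝ, 0 < s → iteratedDeriv j L s = M j s := by
    intro j
    induction j with
    | zero => intro s _; simpa using hL0 s
    | succ n ih =>
        intro s hs
        rw [iteratedDeriv_succ]
        have hev : iteratedDeriv n L =ᶠ[nhds s] M n := by
          filter_upwards [isOpen_Ioi.mem_nhds (Set.mem_Ioi.mpr hs)] with x hx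
          exact ih x hx
        rw [hev.deriv_eq]
        exact (hMderiv n s hs).deriv
  -- the gamma tail function
  set T : ℝ → ℝ := fun y => ∑ j ∈ Finset.range (m + 1),
      Real.exp (-(ϖ * y)) * (ϖ * y) ^ j / j.factorial with hT
  have hTcont : Continuous T := by
    apply continuous_finset_sum
    intro j _
    fun_prop
  have hTnn : ∀ y : ℝ, 0 ≤ y → 0 ≤ T y := by
    intro y hy
    apply Finset.sum_nonneg
    intro j _
    have : (0:ℝ) ≤ (ϖ * y) ^ j := by positivity
    positivity
  -- a.e. nonnegativity of the law of I
  have hIae : ∀ᵐ x ∂(Measure.map I ℙ), 0 ≤ x := by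
    rw [ae_iff]
    have hset0 : {x : ℝ | ¬ 0 ≤ x} = Set.Iio 0 := by ext x; simp [not_le]
    rw [hset0, Measure.map_apply hI measurableSet_Iio]
    have hpre : I ⁻¹' Set.Iio 0 = ∅ := by
      ext a
      simp only [Set.mem_preimage, Set.mem_Iio, Set.mem_empty_iff_false, iff_false, not_lt]
      exact hI0 a
    rw [hpre, measure_empty]
  -- LHS computation
  have hmap : Measure.map (fun a => (I a, J a)) ℙ = (Measure.map I ℙ).prod (Measure.map J ℙ) :=
    (indepFun_iff_map_prod_eq_prod_map_map hI.aemeasurable hJ.aemeasurable).mp hindep.symm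
  have hset : MeasurableSet {p : ℝ × ℝ | p.1 < p.2} :=
    measurableSet_lt measurable_fst measurable_snd
  have hLHS : ℙ {a : Ω | J a > I a} = ∫⁻ a, ENNReal.ofReal (T (I a)) ∂ℙ := by
    have h1 : {a : Ω | J a > I a} = (fun a => (I a, J a)) ⁻¹' {p : ℝ × ℝ | p.1 < p.2} := rfl
    rw [h1, ← Measure.map_apply (hI.prodMk hJ) hset, hmap, Measure.prod_apply hset]
    have h3 : ∫⁻ x, (Measure.map J ℙ) (Prod.mk x ⁻¹' {p : ℝ × ℝ | p.1 < p.2}) ∂(Measure.map I ℙ)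
        = ∫⁻ x, ENNReal.ofReal (T x) ∂(Measure.map I ℙ) := by
      refine lintegral_congr_ae ?_
      filter_upwards [hIae] with x hx
      have h2 : (Prod.mk x ⁻¹' {p : ℝ × ℝ | p.1 < p.2}) = Set.Ioi x := rfl
      rw [h2, hlaw, ← hϖ]
      have := my_gamma_tail m hϖ0 hx
      rw [hT]
      convert this using 2
      push_cast
      ring
    rw [h3, lintegral_map (by fun_prop) hI]
  -- integrability of T ∘ I
  have hterm_le : ∀ (j : ℕ) (y : ℝ), 0 ≤ y →
      Real.exp (-(ϖ * y)) * (ϖ * y) ^ j / j.factorial ≤ 1 := by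
    intro j y hy
    have h := my_pow_mul_exp_neg_le j hϖ0 hy
    have hfj : (0:ℝ) < j.factorial := by positivity
    rw [div_le_one hfj]
    calc Real.exp (-(ϖ * y)) * (ϖ * y) ^ j = ϖ ^ j * (y ^ j * Real.exp (-(ϖ * y))) := by
          rw [mul_pow]; ring
      _ ≤ ϖ ^ j * ((j.factorial : ℝ) / ϖ ^ j) := by
          apply mul_le_mul_of_nonneg_left h (by positivity)
      _ = j.factorial := by field_simp
  have hTIint : Integrable (fun a => T (I a)) ℙ := by
    refine (integrable_const ((m : ℝ) + 1)).mono'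
      ((hTcont.measurable.comp hI).aestronglyMeasurable) (ae_of_all _ fun a => ?_)
    rw [Real.norm_eq_abs, abs_of_nonneg (hTnn _ (hI0 a)), hT]
    calc ∑ j ∈ Finset.range (m + 1),
          Real.exp (-(ϖ * I a)) * (ϖ * I a) ^ j / j.factorial
        ≤ ∑ j ∈ Finset.range (m + 1), (1:ℝ) :=
          Finset.sum_le_sum fun j _ => hterm_le j _ (hI0 a)
      _ = (m : ℝ) + 1 := by simp
  have htoReal : (ℙ {a : Ω | J a > I a}).toReal = ∫ a, T (I a) ∂ℙ := by
    rw [hLHS, ← ofReal_integral_eq_lintegral_ofReal hTIint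
        (ae_of_all _ fun a => hTnn _ (hI0 a)),
      ENNReal.toReal_ofReal (integral_nonneg fun a => hTnn _ (hI0 a))]
  rw [htoReal]
  -- per-term identities
  have heqterm : ∀ (j : ℕ) (a : Ω),
      Real.exp (-(ϖ * I a)) * (ϖ * I a) ^ j / j.factorial
        = ((-ϖ) ^ j / j.factorial) * ((-(I a)) ^ j * Real.exp (-(ϖ * I a))) := by
    intro j a
    have h : (-ϖ) ^ j * (-(I a)) ^ j = (ϖ * I a) ^ j := by
      rw [← mul_pow, neg_mul_neg]
    rw [← h]
    ring
  have hterm_int : ∀ j : ℕ,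
      Integrable (fun a => Real.exp (-(ϖ * I a)) * (ϖ * I a) ^ j / j.factorial) ℙ := by
    intro j
    have := (hMint j ϖ hϖ0).const_mul ((-ϖ) ^ j / j.factorial)
    exact this.congr (ae_of_all _ fun a => (heqterm j a).symm)
  have hsum : ∫ a, T (I a) ∂ℙ = ∑ j ∈ Finset.range (m + 1),
      ∫ a, Real.exp (-(ϖ * I a)) * (ϖ * I a) ^ j / j.factorial ∂ℙ := by
    rw [hT]
    exact integral_finset_sum _ fun j _ => hterm_int j
  rw [hsum]
  refine Finset.sum_congr rfl fun j _ => ?_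
  rw [hIter j ϖ hϖ0, hM]
  show _ = ((-ϖ) ^ j / (j.factorial : ℝ)) * ∫ a, (-(I a)) ^ j * Real.exp (-(ϖ * I a)) ∂ℙ
  rw [← integral_const_mul]
  exact integral_congr_ae (ae_of_all _ fun a => heqterm j a)
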